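/- arXiv:1809.03611 — 2 statements merged into one kernel-verified Lean document; each statement's English description precedes it below -/
import Mathlib

section
/- For every fixed real t > 0, the t-channel correction factor of the corrected Veneziano amplitude grows like the cube of the logarithm of s: lim_{s→∞} C(t,s) / (log s)³ = −1, where C(a,b) = (ψ(a) − ψ(a+b))³ + 3(ψ'(a) − ψ'(a+b))(ψ(a) − ψ(a+b)) + ψ''(a) − ψ''(a+b). (Only the digamma term ψ⁰ contributes to the leading Regge behaviour of the correction.) -/
/-- The digamma function `ψ(x) = Γ'(x)/Γ(x)`. -/
noncomputable def digamma (x : ℝ) : ℝ :=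
  deriv Real.Gamma x / Real.Gamma x

/-- `C(a,b) = (ψ(a)-ψ(a+b))³ + 3(ψ'(a)-ψ'(a+b))(ψ(a)-ψ(a+b)) + ψ''(a)-ψ''(a+b)`. -/
noncomputable def Cfun (a b : ℝ) : ℝ :=
  (digamma a - digamma (a + b)) ^ 3
    + 3 * (deriv digamma a - deriv digamma (a + b)) * (digamma a - digamma (a + b))
    + deriv (deriv digamma) a - deriv (deriv digamma) (a + b)

open Real Filter Set


lemma analyticOnNhd_rGamma : AnalyticOnNhd ℝ Real.Gamma (Ioi 0) := by
  have h : Real.Gamma = fun x : ℝ => Complex.reCLM (Complex.Gamma (Complex.ofRealCLM x)) := by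
    funext x
    simp [Complex.Gamma_ofReal]
  rw [h]
  intro x hx
  have hU : IsOpen {z : ℂ | 0 < z.re} := isOpen_lt continuous_const Complex.continuous_re
  have hG : AnalyticAt ℂ Complex.Gamma (Complex.ofRealCLM x) := by
    apply DifferentiableOn.analyticAt (s := {z : ℂ | 0 < z.re})
    · intro z hz
      exact (Complex.differentiableAt_Gamma z (fun m => by
        intro hzm
        have h1 : z.re = -(m:ℝ) := by rw [hzm]; simp
        have h2 : (0:ℝ) < z.re := hz
        rw [h1] at h2
        have : (0:ℝ) ≤ (m:ℝ) := Nat.cast_nonneg m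
        linarith)).differentiableWithinAt
    · exact hU.mem_nhds (by simpa using hx.out)
  exact (Complex.reCLM.analyticAt _).comp ((hG.restrictScalars).comp (Complex.ofRealCLM.analyticAt x))

lemma analyticOnNhd_digamma : AnalyticOnNhd ℝ digamma (Ioi 0) := by
  intro x hx
  exact ((analyticOnNhd_rGamma.deriv x hx)).div (analyticOnNhd_rGamma x hx)
    (Real.Gamma_pos_of_pos hx).ne'

lemma diffAt_rGamma {x : ℝ} (hx : 0 < x) : DifferentiableAt ℝ Real.Gamma x :=
  Real.differentiableAt_Gamma (fun m => by
    intro h; rw [h] at hx; have : (0:ℝ) ≤ (m:ℝ) := Nat.cast_nonneg m; linarith)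

lemma diffAt_digamma {x : ℝ} (hx : 0 < x) : DifferentiableAt ℝ digamma x :=
  (analyticOnNhd_digamma x hx).differentiableAt

lemma diffAt_digamma' {x : ℝ} (hx : 0 < x) : DifferentiableAt ℝ (deriv digamma) x :=
  (analyticOnNhd_digamma.deriv x hx).differentiableAt

/-- ψ(x+1) = ψ(x) + 1/x -/
lemma digamma_add_one {x : ℝ} (hx : 0 < x) : digamma (x + 1) = digamma x + x⁻¹ := by
  have hGx : (0:ℝ) < Real.Gamma x := Real.Gamma_pos_of_pos hx
  have hEv : (fun y => Real.Gamma (y + 1)) =ᶠ[nhds x] fun y => y * Real.Gamma y := by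
    filter_upwards [isOpen_Ioi.mem_nhds hx] with y hy
    exact Real.Gamma_add_one (ne_of_gt hy)
  have hderiv2 : deriv (fun y => y * Real.Gamma y) x
      = Real.Gamma x + x * deriv Real.Gamma x := by
    have : deriv (fun y => y * Real.Gamma y) x = 1 * Real.Gamma x + x * deriv Real.Gamma x :=
      ((hasDerivAt_id x).mul (diffAt_rGamma hx).hasDerivAt).deriv
    simpa using this
  have key : deriv Real.Gamma (x + 1) = Real.Gamma x + x * deriv Real.Gamma x := by
    rw [← deriv_comp_add_const Real.Gamma 1 x, hEv.deriv_eq, hderiv2]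
  have hG1 : Real.Gamma (x + 1) = x * Real.Gamma x := Real.Gamma_add_one (ne_of_gt hx)
  unfold digamma
  rw [key, hG1]
  field_simp
  ring

/-- ψ'(x+1) = ψ'(x) - 1/x² -/
lemma digamma'_add_one {x : ℝ} (hx : 0 < x) :
    deriv digamma (x + 1) = deriv digamma x - (x ^ 2)⁻¹ := by
  have hEv : (fun y => digamma (y + 1)) =ᶠ[nhds x] fun y => digamma y + y⁻¹ := by
    filter_upwards [isOpen_Ioi.mem_nhds hx] with y hy
    exact digamma_add_one hy
  have h2 : deriv (fun y => digamma y + y⁻¹) x = deriv digamma x - (x ^ 2)⁻¹ := by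
    have : deriv (fun y => digamma y + y⁻¹) x = deriv digamma x + -(x ^ 2)⁻¹ :=
      ((diffAt_digamma hx).hasDerivAt.add (hasDerivAt_inv (ne_of_gt hx))).deriv
    simpa [sub_eq_add_neg] using this
  rw [← deriv_comp_add_const digamma 1 x, hEv.deriv_eq, h2]

/-- ψ''(x+1) = ψ''(x) + 2/x³ -/
lemma digamma''_add_one {x : ℝ} (hx : 0 < x) :
    deriv (deriv digamma) (x + 1) = deriv (deriv digamma) x + 2 * (x ^ 3)⁻¹ := by
  have hEv : (fun y => deriv digamma (y + 1)) =ᶠ[nhds x] fun y => deriv digamma y - (y ^ 2)⁻¹ := by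
    filter_upwards [isOpen_Ioi.mem_nhds hx] with y hy
    exact digamma'_add_one hy
  have hpow : HasDerivAt (fun y : ℝ => (y ^ 2)⁻¹) (-(2 * x ^ 1) / (x ^ 2) ^ 2) x :=
    (hasDerivAt_pow 2 x).inv (pow_ne_zero 2 (ne_of_gt hx))
  have h2 : deriv (fun y => deriv digamma y - (y ^ 2)⁻¹) x
      = deriv (deriv digamma) x + 2 * (x ^ 3)⁻¹ := by
    have : deriv (fun y => deriv digamma y - (y ^ 2)⁻¹) x
        = deriv (deriv digamma) x - -(2 * x ^ 1) / (x ^ 2) ^ 2 :=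
      ((diffAt_digamma' hx).hasDerivAt.sub hpow).deriv
    rw [this]
    have hx' : x ≠ 0 := ne_of_gt hx
    field_simp
    ring
  rw [← deriv_comp_add_const (deriv digamma) 1 x, hEv.deriv_eq, h2]

lemma hasDerivAt_logGamma {x : ℝ} (hx : 0 < x) :
    HasDerivAt (Real.log ∘ Real.Gamma) (digamma x) x := by
  have := (diffAt_rGamma hx).hasDerivAt.log (Real.Gamma_pos_of_pos hx).ne'
  exact this

lemma deriv_logGamma {x : ℝ} (hx : 0 < x) :
    deriv (Real.log ∘ Real.Gamma) x = digamma x := (hasDerivAt_logGamma hx).deriv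

/-- ψ(x) ≤ log x for x > 0 -/
lemma digamma_le_log {x : ℝ} (hx : 0 < x) : digamma x ≤ Real.log x := by
  have hx1 : x + 1 ∈ Ioi (0:ℝ) := by simp; linarith
  have h := Real.convexOn_log_Gamma.deriv_le_slope hx hx1 (by linarith)
    ((diffAt_rGamma hx).log (Real.Gamma_pos_of_pos hx).ne')
  rw [deriv_logGamma hx] at h
  refine h.trans_eq ?_
  rw [slope_def_field]
  simp only [Function.comp_apply]
  rw [Real.Gamma_add_one (ne_of_gt hx), Real.log_mul (ne_of_gt hx)
    (Real.Gamma_pos_of_pos hx).ne']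
  field_simp
  ring

/-- log x ≤ ψ(x+1) for x > 0 -/
lemma log_le_digamma_add_one {x : ℝ} (hx : 0 < x) : Real.log x ≤ digamma (x + 1) := by
  have hx1 : x + 1 ∈ Ioi (0:ℝ) := by simp; linarith
  have hx1' : (0:ℝ) < x + 1 := by linarith
  have h := Real.convexOn_log_Gamma.slope_le_deriv hx hx1 (by linarith)
    ((diffAt_rGamma hx1').log (Real.Gamma_pos_of_pos hx1').ne')
  rw [deriv_logGamma hx1'] at h
  refine le_trans (le_of_eq ?_) h
  rw [slope_def_field]
  simp only [Function.comp_apply]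
  rw [Real.Gamma_add_one (ne_of_gt hx), Real.log_mul (ne_of_gt hx)
    (Real.Gamma_pos_of_pos hx).ne']
  field_simp
  ring

lemma monotoneOn_digamma : MonotoneOn digamma (Ioi 0) := by
  have h := Real.convexOn_log_Gamma.monotoneOn_deriv (fun x hx =>
    (diffAt_rGamma hx).log (Real.Gamma_pos_of_pos hx).ne')
  intro x hx y hy hxy
  have := h hx hy hxy
  rwa [deriv_logGamma hx, deriv_logGamma hy] at this

/-- ψ' ≥ 0 on positives -/
lemma digamma'_nonneg {x : ℝ} (hx : 0 < x) : 0 ≤ deriv digamma x := by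
  have hd : HasDerivWithinAt digamma (deriv digamma x) (Ioi x) x :=
    (diffAt_digamma hx).hasDerivAt.hasDerivWithinAt
  rw [hasDerivWithinAt_iff_tendsto_slope,
    show Ioi x \ {x} = Ioi x from diff_singleton_eq_self (by simp)] at hd
  refine ge_of_tendsto hd ?_
  filter_upwards [self_mem_nhdsWithin] with y hy
  have hy' : x < y := hy
  rw [slope_def_field]
  apply div_nonneg
  · have := monotoneOn_digamma (mem_Ioi.mpr hx) (mem_Ioi.mpr (hx.trans hy')) hy'.le
    linarith
  · linarith

/-- ψ'(x+n) ≤ ψ'(x) -/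
lemma digamma'_shift (n : ℕ) {x : ℝ} (hx : 0 < x) :
    deriv digamma (x + n) ≤ deriv digamma x := by
  induction n with
  | zero => simp
  | succ m ih =>
    have hxm : (0:ℝ) < x + m := by positivity
    have : x + (↑(m+1) : ℝ) = (x + m) + 1 := by push_cast; ring
    rw [this, digamma'_add_one hxm]
    have h2 : (0:ℝ) ≤ ((x + m) ^ 2)⁻¹ := by positivity
    linarith

/-- ψ''(x+n) = ψ''(x) + 2 Σ -/
lemma digamma''_shift (n : ℕ) {x : ℝ} (hx : 0 < x) :
    deriv (deriv digamma) (x + n)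
      = deriv (deriv digamma) x + 2 * ∑ k ∈ Finset.range n, ((x + k) ^ 3)⁻¹ := by
  induction n with
  | zero => simp
  | succ m ih =>
    have hxm : (0:ℝ) < x + m := by positivity
    have h1 : x + (↑(m+1) : ℝ) = (x + m) + 1 := by push_cast; ring
    rw [h1, digamma''_add_one hxm, ih, Finset.sum_range_succ]
    ring

lemma sum_sq_bound (n : ℕ) :
    ∑ k ∈ Finset.range (n+1), (((k:ℝ)+1) ^ 2)⁻¹ ≤ 2 - ((n:ℝ)+1)⁻¹ := by
  induction n with
  | zero => norm_num
  | succ m ih =>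
    rw [Finset.sum_range_succ]
    have h1 : (((m:ℝ)+1+1) ^ 2)⁻¹ ≤ ((m:ℝ)+1)⁻¹ - ((m:ℝ)+1+1)⁻¹ := by
      rw [inv_eq_one_div, inv_eq_one_div, inv_eq_one_div,
        div_sub_div _ _ (by positivity : ((m:ℝ)+1) ≠ 0) (by positivity : ((m:ℝ)+1+1) ≠ 0),
        div_le_div_iff₀ (by positivity) (by positivity)]
      nlinarith [sq_nonneg ((m:ℝ)+1), Nat.cast_nonneg (α := ℝ) m]
    push_cast
    push_cast at ih
    linarith

lemma sum_cube_bound (n : ℕ) {x : ℝ} (hx : 0 < x) :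
    ∑ k ∈ Finset.range n, ((x + k) ^ 3)⁻¹ ≤ (x ^ 3)⁻¹ + 2 := by
  cases n with
  | zero => simp; positivity
  | succ m =>
    rw [Finset.sum_range_succ']
    simp only [Nat.cast_zero, add_zero, Nat.cast_add, Nat.cast_one]
    have h1 : ∑ k ∈ Finset.range m, ((x + ((k:ℝ) + 1)) ^ 3)⁻¹
        ≤ ∑ k ∈ Finset.range m, (((k:ℝ) + 1) ^ 2)⁻¹ := by
      apply Finset.sum_le_sum
      intro k _
      apply inv_anti₀ (by positivity)
      have h4 : ((k:ℝ)+1) ^ 3 ≤ (x + ((k:ℝ)+1)) ^ 3 := by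
        apply pow_le_pow_left₀ (by positivity) (by linarith) 3
      have h5 : ((k:ℝ)+1) ^ 2 ≤ ((k:ℝ)+1) ^ 3 := by
        nlinarith [Nat.cast_nonneg (α := ℝ) k, sq_nonneg ((k:ℝ)+1)]
      linarith
    have h2 : ∑ k ∈ Finset.range m, (((k:ℝ) + 1) ^ 2)⁻¹ ≤ 2 := by
      cases m with
      | zero => simp
      | succ p =>
        have := sum_sq_bound p
        have h3 : (0:ℝ) ≤ ((p:ℝ)+1)⁻¹ := by positivity
        linarith
    linarith

/-- log(s+c)/log s → 1 -/
lemma log_shift_div_log (c : ℝ) :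
    Tendsto (fun s : ℝ => Real.log (s + c) / Real.log s) atTop (nhds 1) := by
  have hfrac : Tendsto (fun s : ℝ => 1 + c * s⁻¹) atTop (nhds 1) := by
    have := tendsto_inv_atTop_zero (𝕜 := ℝ) |>.const_mul c
    simpa using tendsto_const_nhds.add this
  have hlog0 : Tendsto (fun s : ℝ => Real.log (1 + c * s⁻¹)) atTop (nhds 0) := by
    have hc : ContinuousAt Real.log 1 := Real.continuousAt_log (by norm_num)
    have : Tendsto (fun s : ℝ => Real.log (1 + c * s⁻¹)) atTop (nhds (Real.log 1)) :=
      hc.tendsto.comp hfrac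
    simpa using this
  have hLinv : Tendsto (fun s : ℝ => (Real.log s)⁻¹) atTop (nhds 0) :=
    Real.tendsto_log_atTop.inv_tendsto_atTop
  have hmain : Tendsto (fun s : ℝ => 1 + Real.log (1 + c * s⁻¹) * (Real.log s)⁻¹)
      atTop (nhds 1) := by
    have := hlog0.mul hLinv
    simpa using tendsto_const_nhds.add this
  refine hmain.congr' ?_
  filter_upwards [eventually_gt_atTop (max 1 (1 + |c|))] with s hs
  have hs1 : 1 < s := lt_of_le_of_lt (le_max_left _ _) hs
  have hsc : 0 < s + c := by
    have : 1 + |c| < s := lt_of_le_of_lt (le_max_right _ _) hs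
    have := neg_abs_le c
    linarith
  have hlogs : 0 < Real.log s := Real.log_pos hs1
  have hkey : Real.log (s + c) = Real.log s + Real.log (1 + c * s⁻¹) := by
    rw [← Real.log_mul (by linarith) (by
      have : s * (1 + c * s⁻¹) = s + c := by field_simp
      intro h; rw [h] at this; simp at this; linarith)]
    congr 1
    field_simp
  rw [hkey]
  field_simp

/-- For fixed `t > 0`, the t-channel correction factor grows like `-(log s)³`:
`lim_{s→∞} C(t,s)/(log s)³ = -1`. -/
theorem Cfun_t_channel_regge (t : ℝ) (ht : 0 < t) :
    Filter.Tendsto (fun s : ℝ => Cfun t s / (Real.log s) ^ 3) Filter.atTop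
      (nhds (-1)) := by
  -- bounds on compact interval
  obtain ⟨M1, hM1⟩ := isCompact_Icc.exists_bound_of_continuousOn
    (s := Icc t (t+1)) (f := deriv digamma)
    ((analyticOnNhd_digamma.deriv.continuousOn).mono
      (fun x hx => lt_of_lt_of_le ht hx.1))
  obtain ⟨M2, hM2⟩ := isCompact_Icc.exists_bound_of_continuousOn
    (s := Icc t (t+1)) (f := deriv (deriv digamma))
    ((analyticOnNhd_digamma.deriv.deriv.continuousOn).mono
      (fun x hx => lt_of_lt_of_le ht hx.1))
  -- uniform bounds along the ray
  have hray : ∀ s : ℝ, 0 ≤ s →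
      (0 ≤ deriv digamma (t + s) ∧ deriv digamma (t + s) ≤ M1) ∧
      |deriv (deriv digamma) (t + s)| ≤ M2 + 2 * ((t ^ 3)⁻¹ + 2) := by
    intro s hs
    set n := ⌊s⌋₊ with hn
    set u := t + (s - n) with hu
    have hfl : (n : ℝ) ≤ s := Nat.floor_le hs
    have hfl2 : s < n + 1 := Nat.lt_floor_add_one s
    have hut : t ≤ u := by simp [hu]; linarith
    have hu1 : u ≤ t + 1 := by simp [hu]; linarith
    have hu0 : 0 < u := lt_of_lt_of_le ht hut
    have huIcc : u ∈ Icc t (t+1) := ⟨hut, hu1⟩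
    have hsplit : t + s = u + n := by simp [hu]; ring
    constructor
    · constructor
      · exact digamma'_nonneg (by linarith)
      · rw [hsplit]
        refine (digamma'_shift n hu0).trans ?_
        exact (le_abs_self _).trans (hM1 u huIcc)
    · rw [hsplit, digamma''_shift n hu0]
      have hsum0 : 0 ≤ ∑ k ∈ Finset.range n, ((u + (k:ℝ)) ^ 3)⁻¹ := by
        apply Finset.sum_nonneg; intro k _; positivity
      have hsum1 : ∑ k ∈ Finset.range n, ((u + (k:ℝ)) ^ 3)⁻¹ ≤ (t ^ 3)⁻¹ + 2 := by
        refine (sum_cube_bound n hu0).trans ?_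
        have : (u ^ 3)⁻¹ ≤ (t ^ 3)⁻¹ :=
          inv_anti₀ (by positivity) (pow_le_pow_left₀ ht.le hut 3)
        linarith
      have hMu := hM2 u huIcc
      rw [Real.norm_eq_abs] at hMu
      rw [abs_le] at *
      constructor <;> [linarith [hMu.1]; linarith [hMu.2]]
  -- digamma/log → 1
  have hLinv : Tendsto (fun s : ℝ => (Real.log s)⁻¹) atTop (nhds 0) :=
    Real.tendsto_log_atTop.inv_tendsto_atTop
  have hpsi_div : Tendsto (fun s : ℝ => digamma (t + s) / Real.log s) atTop (nhds 1) := by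
    have l1 := log_shift_div_log (t - 1)
    have l2 := log_shift_div_log t
    refine tendsto_of_tendsto_of_tendsto_of_le_of_le' l1 l2 ?_ ?_
    · filter_upwards [eventually_gt_atTop (max 2 (2 - t))] with s hs
      have hs2 : 2 < s := lt_of_le_of_lt (le_max_left _ _) hs
      have hst : 2 - t < s := lt_of_le_of_lt (le_max_right _ _) hs
      have hpos : 0 < t + s - 1 := by linarith
      have hlogs : 0 < Real.log s := Real.log_pos (by linarith)
      have h := log_le_digamma_add_one hpos
      rw [show t + s - 1 + 1 = t + s by ring] at h
      rw [show s + (t - 1) = t + s - 1 by ring]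
      gcongr
    · filter_upwards [eventually_gt_atTop (max 2 (2 - t))] with s hs
      have hs2 : 2 < s := lt_of_le_of_lt (le_max_left _ _) hs
      have hst : 2 - t < s := lt_of_le_of_lt (le_max_right _ _) hs
      have hlogs : 0 < Real.log s := Real.log_pos (by linarith)
      have h := digamma_le_log (show (0:ℝ) < t + s by linarith)
      rw [show s + t = t + s by ring]
      gcongr
  -- first factor: (ψ(t) - ψ(t+s))/log s → -1
  have hA : Tendsto (fun s : ℝ => (digamma t - digamma (t + s)) / Real.log s)
      atTop (nhds (-1)) := by
    have h1 : Tendsto (fun s : ℝ => digamma t * (Real.log s)⁻¹ - digamma (t + s) / Real.log s)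
        atTop (nhds (-1)) := by
      have := (hLinv.const_mul (digamma t)).sub hpsi_div
      simpa using this
    refine h1.congr (fun s => ?_)
    rw [sub_div]; ring
  -- second: (ψ'(t) - ψ'(t+s)) * (log s)⁻¹ → 0
  have hB : Tendsto (fun s : ℝ => (deriv digamma t - deriv digamma (t + s)) * (Real.log s)⁻¹)
      atTop (nhds 0) := by
    apply squeeze_zero_norm' (a := fun s => (|deriv digamma t| + |M1|) * |(Real.log s)⁻¹|)
    · filter_upwards [eventually_ge_atTop 0] with s hs
      have := (hray s hs).1
      rw [norm_mul, Real.norm_eq_abs, Real.norm_eq_abs]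
      apply mul_le_mul_of_nonneg_right ?_ (abs_nonneg _)
      rw [abs_sub_comm]
      calc |deriv digamma (t+s) - deriv digamma t|
          ≤ |deriv digamma (t+s)| + |deriv digamma t| := abs_sub _ _
        _ ≤ |M1| + |deriv digamma t| := by
            apply add_le_add_left
            rw [abs_of_nonneg this.1]
            exact this.2.trans (le_abs_self _)
        _ = |deriv digamma t| + |M1| := by ring
    · have := hLinv.abs.const_mul (|deriv digamma t| + |M1|)
      simpa using this
  -- third: (ψ''(t) - ψ''(t+s)) * ((log s)^3)⁻¹ → 0
  have hL3inv : Tendsto (fun s : ℝ => ((Real.log s) ^ 3)⁻¹) atTop (nhds 0) := by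
    apply Tendsto.inv_tendsto_atTop
    exact (tendsto_pow_atTop (by norm_num : 3 ≠ 0)).comp Real.tendsto_log_atTop
  have hC : Tendsto (fun s : ℝ =>
      (deriv (deriv digamma) t - deriv (deriv digamma) (t + s)) * ((Real.log s) ^ 3)⁻¹)
      atTop (nhds 0) := by
    set K := M2 + 2 * ((t ^ 3)⁻¹ + 2) with hK
    apply squeeze_zero_norm' (a := fun s => (|deriv (deriv digamma) t| + K) * |((Real.log s) ^ 3)⁻¹|)
    · filter_upwards [eventually_ge_atTop 0] with s hs
      have h2 := (hray s hs).2
      rw [norm_mul, Real.norm_eq_abs, Real.norm_eq_abs]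
      apply mul_le_mul_of_nonneg_right ?_ (abs_nonneg _)
      calc |deriv (deriv digamma) t - deriv (deriv digamma) (t+s)|
          ≤ |deriv (deriv digamma) t| + |deriv (deriv digamma) (t+s)| := abs_sub _ _
        _ ≤ |deriv (deriv digamma) t| + K := add_le_add_right h2 _
    · have := hL3inv.abs.const_mul (|deriv (deriv digamma) t| + K)
      simpa using this
  -- assemble
  have hfinal : Tendsto (fun s : ℝ =>
      ((digamma t - digamma (t + s)) / Real.log s) ^ 3
      + 3 * ((deriv digamma t - deriv digamma (t + s)) * (Real.log s)⁻¹)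
          * ((digamma t - digamma (t + s)) / Real.log s) * (Real.log s)⁻¹
      + (deriv (deriv digamma) t - deriv (deriv digamma) (t + s)) * ((Real.log s) ^ 3)⁻¹)
      atTop (nhds (-1)) := by
    have := ((hA.pow 3).add ((((hB.const_mul 3).mul hA).mul hLinv))).add hC
    convert this using 2
    norm_num
  refine hfinal.congr' ?_
  filter_upwards [eventually_gt_atTop 2] with s hs
  have hlogs : 0 < Real.log s := Real.log_pos (by linarith)
  have hne : Real.log s ≠ 0 := hlogs.ne'
  unfold Cfun
  field_simp
  ring
end

section
/- For every fixed real t > 0, the s-channel correction factor of the corrected Veneziano amplitude is subleading in the Regge limit: lim_{s→∞} C(s,t) = 0, where C(a,b) = (ψ(a) − ψ(a+b))³ + 3(ψ'(a) − ψ'(a+b))(ψ(a) − ψ(a+b)) + ψ''(a) − ψ''(a+b). -/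
section DGaux

open Real Filter Topology Set


/-- log ∘ Gamma -/
noncomputable def f : ℝ → ℝ := Real.log ∘ Real.Gamma

/-- ψ as derivative of log Gamma -/
noncomputable def psi (x : ℝ) : ℝ := deriv f x

lemma hder {x : ℝ} (hx : 0 < x) : DifferentiableAt ℝ f x := by
  refine ((Real.differentiableAt_Gamma ?_).log (Real.Gamma_ne_zero ?_)) <;>
  exact fun m => ((neg_nonpos.mpr (m.cast_nonneg)).trans_lt hx).ne'

lemma h_rec (x : ℝ) (hx : 0 < x) : f (x + 1) = f x + Real.log x := by
  simp only [f, Function.comp_apply, Real.Gamma_add_one hx.ne',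
    Real.log_mul hx.ne' (Real.Gamma_pos_of_pos hx).ne', add_comm]

lemma psi_rec (x : ℝ) (hx : 0 < x) : psi (x + 1) = psi x + (x)⁻¹ := by
  unfold psi
  rw [← deriv_comp_add_const, ← Real.deriv_log,
    ← deriv_add (hder hx) (Real.differentiableAt_log hx.ne')]
  apply Filter.EventuallyEq.deriv_eq
  filter_upwards [eventually_gt_nhds hx] using h_rec

lemma psi_lb {x : ℝ} (hx : 0 < x) : Real.log x ≤ psi (x + 1) := by
  refine (le_of_eq ?_).trans <| Real.convexOn_log_Gamma.slope_le_deriv (mem_Ioi.mpr hx)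
    (by positivity : (0:ℝ) < x + 1) (by linarith) (hder (by positivity))
  rw [slope_def_field, add_sub_cancel_left, div_one]
  show _ = (f (x+1) - f x)
  rw [h_rec x hx]; ring

lemma psi_ub {x : ℝ} (hx : 0 < x) : psi (x + 1) ≤ Real.log (x + 1) := by
  refine (Real.convexOn_log_Gamma.deriv_le_slope (by positivity : (0:ℝ) < x + 1)
    (by positivity : (0:ℝ) < x + 2) (by linarith) (hder (by positivity))).trans (le_of_eq ?_)
  rw [slope_def_field, show x + 2 - (x+1) = (1:ℝ) by ring, div_one,
    show x + 2 = (x + 1) + (1:ℝ) by ring]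
  show (f ((x+1)+1) - f (x+1)) = _
  rw [h_rec (x+1) (by positivity)]; ring


lemma psi_lb' {y : ℝ} (hy : 1 < y) : Real.log (y - 1) ≤ psi y := by
  have := psi_lb (x := y - 1) (by linarith)
  simpa using this

lemma psi_ub' {y : ℝ} (hy : 1 < y) : psi y ≤ Real.log y := by
  have := psi_ub (x := y - 1) (by linarith)
  simpa using this

lemma psi_add_nat {x : ℝ} (hx : 0 < x) (n : ℕ) :
    psi (x + n) = psi x + ∑ m ∈ Finset.range n, (x + m)⁻¹ := by
  induction n with
  | zero => simp
  | succ n ih =>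
    have h1 : x + (n + 1 : ℕ) = (x + n) + 1 := by push_cast; ring
    rw [h1, psi_rec _ (by positivity), ih, Finset.sum_range_succ]
    ring

/-- partial approximant to psi -/
noncomputable def G (n : ℕ) (x : ℝ) : ℝ :=
  Real.log (x + n) - ∑ m ∈ Finset.range n, (x + m)⁻¹

lemma G_bounds {x : ℝ} (hx : 0 < x) {n : ℕ} (hn : 1 ≤ n) :
    psi x ≤ G n x ∧ G n x ≤ psi x + (Real.log (x + n) - Real.log (x + n - 1)) := by
  have hx1 : (0:ℝ) < x + n - 1 := by
    have : (1:ℝ) ≤ n := by exact_mod_cast hn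
    linarith
  have key : x + n = (x + n - 1) + 1 := by ring
  have hlb : Real.log (x + n - 1) ≤ psi (x + n) := by
    rw [key]; simpa using psi_lb hx1
  have hub : psi (x + n) ≤ Real.log (x + n) := by
    have h := psi_ub hx1
    rwa [← key] at h
  have hsum := psi_add_nat hx n
  constructor
  · unfold G; linarith
  · unfold G; linarith

lemma log_diff_tendsto (x : ℝ) (hx : 0 < x) :
    Tendsto (fun n : ℕ => Real.log (x + n) - Real.log (x + n - 1)) atTop (𝓝 0) := by
  have h1 : Tendsto (fun n : ℕ => x + (n:ℝ) - 1) atTop atTop := by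
    apply tendsto_atTop_add_const_right
    exact tendsto_atTop_add_const_left _ _ tendsto_natCast_atTop_atTop
  have h2 : Tendsto (fun n : ℕ => 1 + (x + (n:ℝ) - 1)⁻¹) atTop (𝓝 1) := by
    have := h1.inv_tendsto_atTop
    simpa using (tendsto_const_nhds (x := (1:ℝ))).add this
  have h3 : Tendsto (fun n : ℕ => Real.log (1 + (x + (n:ℝ) - 1)⁻¹)) atTop (𝓝 0) := by
    have := (Real.continuousAt_log one_ne_zero).tendsto.comp h2
    simpa [Function.comp_def] using this
  apply h3.congr'
  filter_upwards [eventually_ge_atTop 1] with n hn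
  have hx1 : (0:ℝ) < x + n - 1 := by
    have : (1:ℝ) ≤ n := by exact_mod_cast hn
    linarith
  have hxn : (0:ℝ) < x + n := by linarith
  rw [← Real.log_div hxn.ne' hx1.ne']
  congr 1
  field_simp
  ring

lemma tendsto_G (x : ℝ) (hx : 0 < x) : Tendsto (fun n => G n x) atTop (𝓝 (psi x)) := by
  have hub := (log_diff_tendsto x hx).const_add (psi x)
  rw [add_zero] at hub
  refine tendsto_of_tendsto_of_tendsto_of_le_of_le' tendsto_const_nhds hub ?_ ?_
  · filter_upwards [eventually_ge_atTop 1] with n hn using (G_bounds hx hn).1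
  · filter_upwards [eventually_ge_atTop 1] with n hn using
      by have := (G_bounds hx hn).2; linarith [this]
noncomputable def q (x : ℝ) : ℝ := ∑' m : ℕ, ((x + m) ^ 2)⁻¹
noncomputable def cb (x : ℝ) : ℝ := ∑' m : ℕ, ((x + m) ^ 3)⁻¹
noncomputable def r (x : ℝ) : ℝ := -2 * cb x

lemma telesc {a : ℝ} (ha : 0 < a) : ((a + 1) ^ 2)⁻¹ ≤ a⁻¹ - (a + 1)⁻¹ := by
  have h1 : a⁻¹ - (a + 1)⁻¹ = (a * (a + 1))⁻¹ := by
    field_simp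
    ring
  rw [h1]
  apply inv_anti₀ (by positivity)
  nlinarith

lemma sum_sq_le {x : ℝ} (hx : 0 < x) (n : ℕ) :
    ∑ i ∈ Finset.range n, ((x + i) ^ 2)⁻¹ ≤ (x ^ 2)⁻¹ + x⁻¹ := by
  have key : ∀ n : ℕ, ∑ i ∈ Finset.range (n + 1), ((x + i) ^ 2)⁻¹
      ≤ (x ^ 2)⁻¹ + x⁻¹ - (x + n)⁻¹ := by
    intro n
    induction n with
    | zero => simp
    | succ n ih =>
      rw [Finset.sum_range_succ]
      have hxn : (0:ℝ) < x + n := by positivity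
      have step := telesc hxn
      have hcast : x + ((n:ℕ)+1:ℕ) = (x + n) + 1 := by push_cast; ring
      rw [hcast]
      push_cast
      linarith
  cases n with
  | zero =>
    simp only [Finset.range_zero, Finset.sum_empty]
    positivity
  | succ n =>
    have hxn : (0:ℝ) ≤ (x + n)⁻¹ := by positivity
    linarith [key n]

lemma summable_sq {x : ℝ} (hx : 0 < x) : Summable (fun m : ℕ => ((x + m) ^ 2)⁻¹) :=
  summable_of_sum_range_le (fun m => by positivity) (sum_sq_le hx)

lemma q_nonneg {x : ℝ} (hx : 0 < x) : 0 ≤ q x :=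
  tsum_nonneg fun m => by positivity

lemma q_le {x : ℝ} (hx : 0 < x) : q x ≤ (x ^ 2)⁻¹ + x⁻¹ :=
  Real.tsum_le_of_sum_range_le (fun m => by positivity) (sum_sq_le hx)

lemma cube_le_sq {x : ℝ} (hx : 0 < x) (m : ℕ) :
    ((x + m) ^ 3)⁻¹ ≤ x⁻¹ * ((x + m) ^ 2)⁻¹ := by
  rw [← mul_inv]
  apply inv_anti₀ (by positivity)
  have h : (0:ℝ) < x + m := by positivity
  nlinarith

lemma summable_cb {x : ℝ} (hx : 0 < x) : Summable (fun m : ℕ => ((x + m) ^ 3)⁻¹) :=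
  Summable.of_nonneg_of_le (fun m => by positivity) (cube_le_sq hx)
    ((summable_sq hx).mul_left x⁻¹)

lemma cb_nonneg {x : ℝ} (hx : 0 < x) : 0 ≤ cb x :=
  tsum_nonneg fun m => by positivity

lemma cb_le {x : ℝ} (hx : 0 < x) : cb x ≤ x⁻¹ * ((x ^ 2)⁻¹ + x⁻¹) := by
  have h1 : cb x ≤ ∑' m : ℕ, x⁻¹ * ((x + m) ^ 2)⁻¹ :=
    Summable.tsum_le_tsum (cube_le_sq hx) (summable_cb hx) ((summable_sq hx).mul_left x⁻¹)
  have h2 : ∑' m : ℕ, x⁻¹ * ((x + m) ^ 2)⁻¹ = x⁻¹ * q x := tsum_mul_left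
  calc cb x ≤ x⁻¹ * q x := h2 ▸ h1
    _ ≤ x⁻¹ * ((x ^ 2)⁻¹ + x⁻¹) := by
        apply mul_le_mul_of_nonneg_left (q_le hx) (by positivity)

lemma q_tail {x : ℝ} (hx : 0 < x) (n : ℕ) :
    q x - ∑ i ∈ Finset.range n, ((x + i) ^ 2)⁻¹ = q (x + n) := by
  have h := Summable.sum_add_tsum_nat_add (f := fun m : ℕ => ((x + m) ^ 2)⁻¹) n (summable_sq hx)
  have h2 : ∑' i : ℕ, ((x + (i + n : ℕ)) ^ 2)⁻¹ = q (x + n) := by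
    unfold q
    congr 1
    funext i
    push_cast
    ring_nf
  rw [← h2]
  unfold q
  linarith [h]

lemma cb_tail {x : ℝ} (hx : 0 < x) (n : ℕ) :
    cb x - ∑ i ∈ Finset.range n, ((x + i) ^ 3)⁻¹ = cb (x + n) := by
  have h := Summable.sum_add_tsum_nat_add (f := fun m : ℕ => ((x + m) ^ 3)⁻¹) n (summable_cb hx)
  have h2 : ∑' i : ℕ, ((x + (i + n : ℕ)) ^ 3)⁻¹ = cb (x + n) := by
    unfold cb
    congr 1
    funext i
    push_cast
    ring_nf
  rw [← h2]
  unfold cb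
  linarith [h]

noncomputable def G' (n : ℕ) (x : ℝ) : ℝ :=
  (x + n)⁻¹ + ∑ m ∈ Finset.range n, ((x + m) ^ 2)⁻¹

lemma hasDerivAt_G {x : ℝ} (hx : 0 < x) (n : ℕ) : HasDerivAt (G n) (G' n x) x := by
  have h1 : HasDerivAt (fun y : ℝ => Real.log (y + n)) (1 / (x + n)) x := by
    simpa using (((hasDerivAt_id x).add_const (n:ℝ)).log (by positivity))
  have h2 : HasDerivAt (fun y : ℝ => ∑ m ∈ Finset.range n, (y + m)⁻¹)
      (∑ m ∈ Finset.range n, (-(1) / (x + m) ^ 2)) x := by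
    apply HasDerivAt.fun_sum
    intro m _
    exact ((hasDerivAt_id x).add_const (m:ℝ)).inv (by positivity)
  have h3 := h1.sub h2
  refine h3.congr_deriv ?_
  unfold G'
  simp [one_div, neg_div, sub_neg_eq_add, Finset.sum_neg_distrib]

noncomputable def Q (n : ℕ) (x : ℝ) : ℝ := ∑ m ∈ Finset.range n, ((x + m) ^ 2)⁻¹
noncomputable def Q' (n : ℕ) (x : ℝ) : ℝ := -2 * ∑ m ∈ Finset.range n, ((x + m) ^ 3)⁻¹

lemma hasDerivAt_Q {x : ℝ} (hx : 0 < x) (n : ℕ) : HasDerivAt (Q n) (Q' n x) x := by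
  have h2 : HasDerivAt (fun y : ℝ => ∑ m ∈ Finset.range n, ((y + m) ^ 2)⁻¹)
      (∑ m ∈ Finset.range n, (-2 * ((x + m) ^ 3)⁻¹)) x := by
    apply HasDerivAt.fun_sum
    intro m _
    have hp : HasDerivAt (fun y : ℝ => (y + m) ^ 2) (2 * (x + m) ^ 1 * 1) x :=
      ((hasDerivAt_id x).add_const (m:ℝ)).pow 2
    have := hp.inv (by positivity : (x + (m:ℝ)) ^ 2 ≠ 0)
    refine this.congr_deriv ?_
    have hxm : (0:ℝ) < x + m := by positivity
    field_simp
  have : ∑ m ∈ Finset.range n, (-2 * ((x + m) ^ 3)⁻¹)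
      = -2 * ∑ m ∈ Finset.range n, ((x + m) ^ 3)⁻¹ := by
    rw [Finset.mul_sum]
  rw [this] at h2
  exact h2

lemma inv_nat_tendsto (δ : ℝ) : Tendsto (fun n : ℕ => (δ + n)⁻¹) atTop (𝓝 0) := by
  exact (tendsto_atTop_add_const_left _ δ tendsto_natCast_atTop_atTop).inv_tendsto_atTop

lemma unifG' {δ : ℝ} (hδ : 0 < δ) : TendstoUniformlyOn G' q atTop (Ioi δ) := by
  rw [Metric.tendstoUniformlyOn_iff]
  intro ε hε
  have hinv := inv_nat_tendsto δ
  have hc : Tendsto (fun n : ℕ => ((δ + n)⁻¹) ^ 2 + 2 * (δ + n)⁻¹) atTop (𝓝 0) := by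
    have := (hinv.pow 2).add (hinv.const_mul 2)
    simpa using this
  filter_upwards [hc.eventually (gt_mem_nhds hε)] with n hn x hx
  rw [Real.dist_eq]
  have hxδ : δ < x := hx
  have hx0 : (0:ℝ) < x := hδ.trans hxδ
  have hxn : (0:ℝ) < x + n := by positivity
  have hδn : (0:ℝ) < δ + n := by positivity
  have htail := q_tail hx0 n
  have hkey : q x - G' n x = q (x + n) - (x + n)⁻¹ := by
    unfold G'; linarith [htail]
  have h1 : (x + n)⁻¹ ≤ (δ + n)⁻¹ := inv_anti₀ hδn (by linarith)
  have h2 : ((x + n) ^ 2)⁻¹ ≤ ((δ + n)⁻¹) ^ 2 := by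
    rw [← inv_pow]
    exact pow_le_pow_left₀ (by positivity) h1 2
  have hq0 := q_nonneg hxn
  have hql := q_le hxn
  have hp1 : (0:ℝ) < (δ + n)⁻¹ := by positivity
  have hp2 : (0:ℝ) < (x + n)⁻¹ := by positivity
  rw [hkey]
  rw [abs_lt]
  constructor <;> nlinarith [h1, h2, hq0, hql, hn, hp1, hp2]

lemma hasDerivAt_psi {x : ℝ} (hx : 0 < x) : HasDerivAt psi (q x) x := by
  refine hasDerivAt_of_tendstoUniformlyOn (isOpen_Ioi (a := x / 2)) (unifG' (by positivity))
    (Eventually.of_forall fun n y hy => hasDerivAt_G (lt_trans (by positivity) hy) n)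
    (fun y hy => tendsto_G y (lt_trans (by positivity) hy)) ?_
  exact mem_Ioi.mpr (by linarith)

lemma unifQ' {δ : ℝ} (hδ : 0 < δ) : TendstoUniformlyOn Q' r atTop (Ioi δ) := by
  rw [Metric.tendstoUniformlyOn_iff]
  intro ε hε
  have hinv := inv_nat_tendsto δ
  have hc : Tendsto (fun n : ℕ => 2 * ((δ + n)⁻¹ * (((δ + n)⁻¹) ^ 2 + (δ + n)⁻¹))) atTop (𝓝 0) := by
    have := (hinv.mul ((hinv.pow 2).add hinv)).const_mul 2
    simpa using this
  filter_upwards [hc.eventually (gt_mem_nhds hε)] with n hn x hx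
  rw [Real.dist_eq]
  have hxδ : δ < x := hx
  have hx0 : (0:ℝ) < x := hδ.trans hxδ
  have hxn : (0:ℝ) < x + n := by positivity
  have hδn : (0:ℝ) < δ + n := by positivity
  have htail := cb_tail hx0 n
  have hkey : r x - Q' n x = -2 * cb (x + n) := by
    unfold Q' r; linarith [htail]
  have h1 : (x + n)⁻¹ ≤ (δ + n)⁻¹ := inv_anti₀ hδn (by linarith)
  have h2 : ((x + n) ^ 2)⁻¹ ≤ ((δ + n)⁻¹) ^ 2 := by
    rw [← inv_pow]
    exact pow_le_pow_left₀ (by positivity) h1 2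
  have hcb0 := cb_nonneg hxn
  have hcbl := cb_le hxn
  have hp1 : (0:ℝ) < (δ + n)⁻¹ := by positivity
  have hp2 : (0:ℝ) < (x + n)⁻¹ := by positivity
  rw [hkey, abs_lt]
  have hmul : (x + n)⁻¹ * (((x + n) ^ 2)⁻¹ + (x + n)⁻¹)
      ≤ (δ + n)⁻¹ * (((δ + n)⁻¹) ^ 2 + (δ + n)⁻¹) := by
    apply mul_le_mul h1 (by linarith) (by positivity) (by positivity)
  constructor <;> nlinarith [hcb0, hcbl, hmul, hn, hp1, hp2]

lemma tendsto_Q (x : ℝ) (hx : 0 < x) : Tendsto (fun n => Q n x) atTop (𝓝 (q x)) :=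
  (summable_sq hx).hasSum.tendsto_sum_nat

lemma hasDerivAt_q {x : ℝ} (hx : 0 < x) : HasDerivAt q (r x) x := by
  refine hasDerivAt_of_tendstoUniformlyOn (isOpen_Ioi (a := x / 2)) (unifQ' (by positivity))
    (Eventually.of_forall fun n y hy => hasDerivAt_Q (lt_trans (by positivity) hy) n)
    (fun y hy => tendsto_Q y (lt_trans (by positivity) hy)) ?_
  exact mem_Ioi.mpr (by linarith)

lemma digamma_eq {x : ℝ} (hx : 0 < x) : digamma x = psi x := by
  have h := deriv.log (Real.differentiableAt_Gamma
      (fun m => ((neg_nonpos.mpr (m.cast_nonneg)).trans_lt hx).ne'))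
      (Real.Gamma_pos_of_pos hx).ne'
  unfold digamma psi f
  rw [Function.comp_def, h]

lemma deriv_digamma_eq {x : ℝ} (hx : 0 < x) : deriv digamma x = q x := by
  have hev : digamma =ᶠ[𝓝 x] psi := by
    filter_upwards [Ioi_mem_nhds hx] with y hy using digamma_eq hy
  exact ((hasDerivAt_psi hx).congr_of_eventuallyEq hev).deriv

lemma deriv2_digamma_eq {x : ℝ} (hx : 0 < x) : deriv (deriv digamma) x = r x := by
  have hev : deriv digamma =ᶠ[𝓝 x] q := by
    filter_upwards [Ioi_mem_nhds hx] with y hy using deriv_digamma_eq hy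
  exact ((hasDerivAt_q hx).congr_of_eventuallyEq hev).deriv

lemma inv_shift_tendsto (t : ℝ) : Tendsto (fun s : ℝ => (s + t)⁻¹) atTop (𝓝 0) :=
  (tendsto_atTop_add_const_right _ t tendsto_id).inv_tendsto_atTop

lemma tendsto_q_shift (t : ℝ) : Tendsto (fun s : ℝ => q (s + t)) atTop (𝓝 0) := by
  have hinv := inv_shift_tendsto t
  have hB : Tendsto (fun s : ℝ => ((s + t)⁻¹) ^ 2 + (s + t)⁻¹) atTop (𝓝 0) := by
    simpa using (hinv.pow 2).add hinv
  refine tendsto_of_tendsto_of_tendsto_of_le_of_le' tendsto_const_nhds hB ?_ ?_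
  · filter_upwards [eventually_gt_atTop (-t)] with s hs
    exact q_nonneg (by linarith)
  · filter_upwards [eventually_gt_atTop (-t)] with s hs
    have := q_le (x := s + t) (by linarith)
    rwa [← inv_pow] at this

lemma tendsto_r_shift (t : ℝ) : Tendsto (fun s : ℝ => r (s + t)) atTop (𝓝 0) := by
  have hinv := inv_shift_tendsto t
  have hB : Tendsto (fun s : ℝ => -2 * ((s + t)⁻¹ * (((s + t)⁻¹) ^ 2 + (s + t)⁻¹)))
      atTop (𝓝 0) := by
    simpa using ((hinv.mul ((hinv.pow 2).add hinv)).const_mul (-2))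
  refine tendsto_of_tendsto_of_tendsto_of_le_of_le' hB tendsto_const_nhds ?_ ?_
  · filter_upwards [eventually_gt_atTop (-t)] with s hs
    have h0 : (0:ℝ) < s + t := by linarith
    have := cb_le h0
    unfold r
    rw [← inv_pow] at this
    nlinarith [this]
  · filter_upwards [eventually_gt_atTop (-t)] with s hs
    have h0 : (0:ℝ) < s + t := by linarith
    have := cb_nonneg h0
    unfold r
    nlinarith [this]

lemma ratio_tendsto (a b : ℝ) : Tendsto (fun s : ℝ => (s + a) / (s + b)) atTop (𝓝 1) := by
  have hinv := inv_shift_tendsto b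
  have h : Tendsto (fun s : ℝ => 1 + (a - b) * (s + b)⁻¹) atTop (𝓝 1) := by
    simpa using tendsto_const_nhds.add (hinv.const_mul (a - b))
  apply h.congr'
  filter_upwards [eventually_gt_atTop (-b)] with s hs
  have h0 : s + b ≠ 0 := by linarith
  field_simp
  ring

lemma logdiff_tendsto (a b : ℝ) :
    Tendsto (fun s : ℝ => Real.log (s + a) - Real.log (s + b)) atTop (𝓝 0) := by
  have h : Tendsto (fun s : ℝ => Real.log ((s + a) / (s + b))) atTop (𝓝 0) := by
    have := (Real.continuousAt_log one_ne_zero).tendsto.comp (ratio_tendsto a b)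
    simpa [Function.comp_def] using this
  apply h.congr'
  filter_upwards [eventually_gt_atTop (max (-a) (-b))] with s hs
  have ha : (0:ℝ) < s + a := by have := (max_lt_iff.mp hs).1; linarith
  have hb : (0:ℝ) < s + b := by have := (max_lt_iff.mp hs).2; linarith
  rw [Real.log_div ha.ne' hb.ne']

lemma tendsto_psi_diff {t : ℝ} (ht : 0 < t) :
    Tendsto (fun s : ℝ => psi s - psi (s + t)) atTop (𝓝 0) := by
  have hlow : Tendsto (fun s : ℝ => Real.log (s + (-1)) - Real.log (s + t)) atTop (𝓝 0) :=
    logdiff_tendsto (-1) t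
  have hup : Tendsto (fun s : ℝ => Real.log (s + 0) - Real.log (s + (t - 1))) atTop (𝓝 0) :=
    logdiff_tendsto 0 (t - 1)
  refine tendsto_of_tendsto_of_tendsto_of_le_of_le' hlow hup ?_ ?_
  · filter_upwards [eventually_gt_atTop 1] with s hs
    have h1 : Real.log (s - 1) ≤ psi s := psi_lb' hs
    have h2 : psi (s + t) ≤ Real.log (s + t) := psi_ub' (by linarith)
    have : s + (-1) = s - 1 := by ring
    rw [this]
    linarith
  · filter_upwards [eventually_gt_atTop 1] with s hs
    have h1 : psi s ≤ Real.log s := psi_ub' hs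
    have h2 : Real.log (s + t - 1) ≤ psi (s + t) := psi_lb' (by linarith)
    have e1 : s + 0 = s := by ring
    have e2 : s + (t - 1) = s + t - 1 := by ring
    rw [e1, e2]
    linarith

theorem Cfun_tendsto (t : ℝ) (ht : 0 < t) :
    Tendsto (fun s : ℝ => Cfun s t) atTop (𝓝 0) := by
  have hA := tendsto_psi_diff ht
  have hq0 : Tendsto (fun s : ℝ => q s) atTop (𝓝 0) := by
    simpa using tendsto_q_shift 0
  have hr0 : Tendsto (fun s : ℝ => r s) atTop (𝓝 0) := by
    simpa using tendsto_r_shift 0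
  have hB : Tendsto (fun s : ℝ => q s - q (s + t)) atTop (𝓝 0) := by
    simpa using hq0.sub (tendsto_q_shift t)
  have hC : Tendsto (fun s : ℝ => r s - r (s + t)) atTop (𝓝 0) := by
    simpa using hr0.sub (tendsto_r_shift t)
  have hmain : Tendsto (fun s : ℝ =>
      (psi s - psi (s + t)) ^ 3 + 3 * (q s - q (s + t)) * (psi s - psi (s + t))
        + (r s - r (s + t))) atTop (𝓝 0) := by
    have := ((hA.pow 3).add (((hB.const_mul 3)).mul hA)).add hC
    simpa using this
  apply hmain.congr'
  filter_upwards [eventually_gt_atTop 0] with s hs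
  have hst : (0:ℝ) < s + t := by linarith
  unfold Cfun
  rw [digamma_eq hs, digamma_eq hst, deriv_digamma_eq hs, deriv_digamma_eq hst,
    deriv2_digamma_eq hs, deriv2_digamma_eq hst]
  ring

end DGaux


/-- For fixed `t > 0`, the s-channel correction factor is subleading:
`lim_{s→∞} C(s,t) = 0`. -/
theorem Cfun_s_channel_regge (t : ℝ) (ht : 0 < t) :
    Filter.Tendsto (fun s : ℝ => Cfun s t) Filter.atTop (nhds 0) :=
  Cfun_tendsto t ht
end
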